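/- Let X, Y be real random variables symmetric about the origin such that |φ_X| and |φ_Y| are decreasing on [0,∞). If Z has law pμ_X + (1−p)μ_Y for some p ∈ [0,1], then |φ_Z| is decreasing on [0,∞), so Z is reasonable with respect to cos. -/

import Mathlib

open MeasureTheory Set

lemma intg {Ω : Type*} [MeasurableSpace Ω] (P : Measure Ω) [IsProbabilityMeasure P]
    (W : Ω → ℝ) (hW : Measurable W) (t : ℝ) :
    Integrable (fun ω => Complex.exp (Complex.I * (t * W ω))) P := by
  have hm : Measurable (fun ω => Complex.exp (Complex.I * (t * W ω))) := by
    measurability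
  apply (integrable_const (1 : ℝ)).mono' hm.aestronglyMeasurable
  filter_upwards with ω
  simp [Complex.norm_exp]

lemma tolaw {Ω : Type*} [MeasurableSpace Ω] (P : Measure Ω) (W : Ω → ℝ) (hW : Measurable W) (t : ℝ) :
    ∫ ω, Complex.exp (Complex.I * (t * W ω)) ∂P
      = ∫ x, Complex.exp (Complex.I * (t * x)) ∂(P.map W) := by
  rw [integral_map hW.aemeasurable]
  exact (Complex.continuous_exp.comp (continuous_const.mul
    (continuous_const.mul Complex.continuous_ofReal))).aestronglyMeasurable

lemma realval {Ω : Type*} [MeasurableSpace Ω] (P : Measure Ω) [IsProbabilityMeasure P]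
    (W : Ω → ℝ) (hW : Measurable W) (hsymm : P.map W = P.map (fun ω => -W ω)) (t : ℝ) :
    ((∫ ω, Complex.exp (Complex.I * (t * W ω)) ∂P).re : ℂ)
      = ∫ ω, Complex.exp (Complex.I * (t * W ω)) ∂P := by
  rw [← Complex.conj_eq_iff_re, ← integral_conj]
  calc ∫ ω, (starRingEnd ℂ) (Complex.exp (Complex.I * (t * W ω))) ∂P
      = ∫ ω, Complex.exp (Complex.I * (t * ((fun ω => -W ω) ω))) ∂P := by
        refine integral_congr_ae (Filter.Eventually.of_forall fun ω => ?_)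
        show (starRingEnd ℂ) (Complex.exp (Complex.I * (t * W ω)))
          = Complex.exp (Complex.I * (t * (-W ω : ℝ)))
        rw [← Complex.exp_conj]
        congr 1
        simp [map_mul, Complex.conj_I, Complex.conj_ofReal]
    _ = ∫ x, Complex.exp (Complex.I * (t * x)) ∂(P.map (fun ω => -W ω)) :=
        tolaw P (fun ω => -W ω) hW.neg t
    _ = ∫ x, Complex.exp (Complex.I * (t * x)) ∂(P.map W) := by rw [← hsymm]
    _ = ∫ ω, Complex.exp (Complex.I * (t * W ω)) ∂P := (tolaw P W hW t).symm

lemma contin {Ω : Type*} [MeasurableSpace Ω] (P : Measure Ω) [IsProbabilityMeasure P]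
    (W : Ω → ℝ) (hW : Measurable W) :
    Continuous (fun t : ℝ => ∫ ω, Complex.exp (Complex.I * (t * W ω)) ∂P) := by
  apply continuous_of_dominated (bound := fun _ => (1 : ℝ))
  · intro t
    have hm : Measurable (fun ω => Complex.exp (Complex.I * (t * W ω))) := by measurability
    exact hm.aestronglyMeasurable
  · intro t
    filter_upwards with ω
    simp [Complex.norm_exp]
  · exact integrable_const 1
  · filter_upwards with ω
    fun_prop

lemma at0 {Ω : Type*} [MeasurableSpace Ω] (P : Measure Ω) [IsProbabilityMeasure P]
    (W : Ω → ℝ) : ∫ ω, Complex.exp (Complex.I * ((0:ℝ) * W ω)) ∂P = 1 := by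
  simp

lemma nonneg_of_antitone (f : ℝ → ℝ) (hf : Continuous f) (h0 : f 0 = 1)
    (hdec : AntitoneOn (fun t => |f t|) (Ici 0)) : ∀ t ∈ Ici (0:ℝ), 0 ≤ f t := by
  intro t ht
  by_contra h
  push_neg at h
  have h0t : (0:ℝ) < t := by
    rcases lt_or_eq_of_le (mem_Ici.mp ht) with h' | h'
    · exact h'
    · exfalso; rw [← h'] at h; linarith [h0 ▸ h]
  obtain ⟨s, hs, hfs⟩ := intermediate_value_Ioo' (le_of_lt h0t) hf.continuousOn
    (by rw [h0]; exact ⟨h, by norm_num⟩ : (0:ℝ) ∈ Ioo (f t) (f 0))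
  have : |f t| ≤ |f s| := hdec (le_of_lt hs.1) ht (le_of_lt hs.2)
  rw [hfs] at this
  simp at this
  linarith

lemma supre (w : ℂ) : (⨆ a : ℝ, (Complex.exp (↑a * Complex.I) * w).re) = ‖w‖ := by
  have bound : ∀ a : ℝ, (Complex.exp (↑a * Complex.I) * w).re ≤ ‖w‖ := by
    intro a
    calc (Complex.exp (↑a * Complex.I) * w).re ≤ ‖Complex.exp (↑a * Complex.I) * w‖ :=
          Complex.re_le_norm _
      _ = ‖w‖ := by rw [norm_mul, Complex.norm_exp_ofReal_mul_I, one_mul]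
  apply le_antisymm
  · exact ciSup_le bound
  · have key : (Complex.exp (↑(-w.arg) * Complex.I) * w).re = ‖w‖ := by
      have h : Complex.exp (↑(-w.arg) * Complex.I) * w = ((‖w‖ : ℝ) : ℂ) := by
        calc Complex.exp (↑(-w.arg) * Complex.I) * w
            = Complex.exp (↑(-w.arg) * Complex.I) * (↑(‖w‖) * Complex.exp (↑w.arg * Complex.I)) := by
              rw [Complex.norm_mul_exp_arg_mul_I]
          _ = ↑(‖w‖) * Complex.exp (↑(-w.arg) * Complex.I + ↑w.arg * Complex.I) := by
              rw [Complex.exp_add]; ring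
          _ = ↑(‖w‖) := by
              rw [show (↑(-w.arg) * Complex.I + ↑w.arg * Complex.I : ℂ) = 0 by push_cast; ring,
                Complex.exp_zero, mul_one]
      rw [h, Complex.ofReal_re]
    rw [← key]
    exact le_ciSup ⟨‖w‖, by rintro x ⟨a, rfl⟩; exact bound a⟩ (-w.arg)


/-- Let `X, Y` be real random variables symmetric about the origin with `|φ_X|`
and `|φ_Y|` decreasing on `[0,∞)`. If `Z` has law `p μ_X + (1−p) μ_Y` for some `p ∈ [0,1]`,
then `|φ_Z|` is decreasing on `[0,∞)`, so `Z` is reasonable with respect to `cos`. -/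
theorem stmt10 {Ω : Type*} [MeasurableSpace Ω] (P : Measure Ω) [IsProbabilityMeasure P]
    {Ω' : Type*} [MeasurableSpace Ω'] (P' : Measure Ω') [IsProbabilityMeasure P']
    (X Y : Ω → ℝ) (hX : Measurable X) (hY : Measurable Y)
    (hXsymm : P.map X = P.map (fun ω => -X ω))
    (hYsymm : P.map Y = P.map (fun ω => -Y ω))
    (φX φY : ℝ → ℂ)
    (hφX : ∀ t : ℝ, φX t = ∫ ω, Complex.exp (Complex.I * (t * X ω)) ∂P)
    (hφY : ∀ t : ℝ, φY t = ∫ ω, Complex.exp (Complex.I * (t * Y ω)) ∂P)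
    (hXdec : AntitoneOn (fun t : ℝ => ‖φX t‖) (Ici 0))
    (hYdec : AntitoneOn (fun t : ℝ => ‖φY t‖) (Ici 0))
    (p : ℝ) (hp0 : 0 ≤ p) (hp1 : p ≤ 1)
    (Z : Ω' → ℝ) (hZ : Measurable Z)
    (hZlaw : P'.map Z = ENNReal.ofReal p • P.map X + ENNReal.ofReal (1 - p) • P.map Y)
    (φZ : ℝ → ℂ)
    (hφZ : ∀ t : ℝ, φZ t = ∫ ω, Complex.exp (Complex.I * (t * Z ω)) ∂P') :
    AntitoneOn (fun t : ℝ => ‖φZ t‖) (Ici 0) ∧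
      AntitoneOn (fun d : ℝ => ⨆ a : ℝ, ∫ ω, Real.cos (a + d * Z ω) ∂P') (Ioi 0) := by
  have hXr : ∀ t, ((φX t).re : ℂ) = φX t := fun t => by rw [hφX]; exact realval P X hX hXsymm t
  have hYr : ∀ t, ((φY t).re : ℂ) = φY t := fun t => by rw [hφY]; exact realval P Y hY hYsymm t
  have hφXeq : φX = fun t : ℝ => ∫ ω, Complex.exp (Complex.I * (t * X ω)) ∂P := funext hφX
  have hφYeq : φY = fun t : ℝ => ∫ ω, Complex.exp (Complex.I * (t * Y ω)) ∂P := funext hφY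
  have hφXc : Continuous fun t => (φX t).re := by
    have h := contin P X hX
    rw [← hφXeq] at h
    exact Complex.continuous_re.comp h
  have hφYc : Continuous fun t => (φY t).re := by
    have h := contin P Y hY
    rw [← hφYeq] at h
    exact Complex.continuous_re.comp h
  have hX0 : (φX 0).re = 1 := by rw [hφX 0, at0 P X]; simp
  have hY0 : (φY 0).re = 1 := by rw [hφY 0, at0 P Y]; simp
  have habsX : ∀ t, |(φX t).re| = ‖φX t‖ := fun t => by
    have := congrArg norm (hXr t); rw [Complex.norm_real, Real.norm_eq_abs] at this; exact this
  have habsY : ∀ t, |(φY t).re| = ‖φY t‖ := fun t => by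
    have := congrArg norm (hYr t); rw [Complex.norm_real, Real.norm_eq_abs] at this; exact this
  have hXnn : ∀ t ∈ Ici (0:ℝ), 0 ≤ (φX t).re := by
    refine nonneg_of_antitone _ hφXc hX0 ?_
    have h : (fun t => |(φX t).re|) = fun t => ‖φX t‖ := funext habsX
    rw [h]; exact hXdec
  have hYnn : ∀ t ∈ Ici (0:ℝ), 0 ≤ (φY t).re := by
    refine nonneg_of_antitone _ hφYc hY0 ?_
    have h : (fun t => |(φY t).re|) = fun t => ‖φY t‖ := funext habsY
    rw [h]; exact hYdec
  have hXmono : ∀ s ∈ Ici (0:ℝ), ∀ t ∈ Ici (0:ℝ), s ≤ t → (φX t).re ≤ (φX s).re := by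
    intro s hs t ht hst
    have h := hXdec hs ht hst
    dsimp only at h
    rw [← habsX s, ← habsX t, abs_of_nonneg (hXnn s hs), abs_of_nonneg (hXnn t ht)] at h
    exact h
  have hYmono : ∀ s ∈ Ici (0:ℝ), ∀ t ∈ Ici (0:ℝ), s ≤ t → (φY t).re ≤ (φY s).re := by
    intro s hs t ht hst
    have h := hYdec hs ht hst
    dsimp only at h
    rw [← habsY s, ← habsY t, abs_of_nonneg (hYnn s hs), abs_of_nonneg (hYnn t ht)] at h
    exact h
  -- decomposition of φZ
  have hcontg : ∀ t : ℝ, Continuous fun x : ℝ => Complex.exp (Complex.I * (t * x)) := fun t =>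
    Complex.continuous_exp.comp (continuous_const.mul (continuous_const.mul
      Complex.continuous_ofReal))
  have hintX : ∀ t : ℝ, Integrable (fun x : ℝ => Complex.exp (Complex.I * (t * x))) (P.map X) := by
    intro t
    rw [integrable_map_measure (hcontg t).aestronglyMeasurable hX.aemeasurable]
    exact intg P X hX t
  have hintY : ∀ t : ℝ, Integrable (fun x : ℝ => Complex.exp (Complex.I * (t * x))) (P.map Y) := by
    intro t
    rw [integrable_map_measure (hcontg t).aestronglyMeasurable hY.aemeasurable]
    exact intg P Y hY t
  have hZeq : ∀ t, φZ t = (p : ℂ) * φX t + ((1 - p : ℝ) : ℂ) * φY t := by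
    intro t
    rw [hφZ, tolaw P' Z hZ t, hZlaw,
      integral_add_measure ((hintX t).smul_measure ENNReal.ofReal_ne_top)
        ((hintY t).smul_measure ENNReal.ofReal_ne_top),
      integral_smul_measure, integral_smul_measure,
      ENNReal.toReal_ofReal hp0, ENNReal.toReal_ofReal (by linarith : (0:ℝ) ≤ 1 - p),
      ← tolaw P X hX t, ← tolaw P Y hY t, ← hφX, ← hφY]
    simp [Complex.real_smul]
  have hZabs : ∀ t ∈ Ici (0:ℝ), ‖φZ t‖ = p * (φX t).re + (1 - p) * (φY t).re := by
    intro t ht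
    have hval : φZ t = ((p * (φX t).re + (1 - p) * (φY t).re : ℝ) : ℂ) := by
      rw [hZeq t]
      push_cast
      rw [hXr t, hYr t]
    rw [hval, Complex.norm_real, Real.norm_eq_abs, abs_of_nonneg]
    exact add_nonneg (mul_nonneg hp0 (hXnn t ht)) (mul_nonneg (by linarith) (hYnn t ht))
  have part1 : AntitoneOn (fun t : ℝ => ‖φZ t‖) (Ici 0) := by
    intro s hs t ht hst
    simp only
    rw [hZabs s hs, hZabs t ht]
    have h1 := hXmono s hs t ht hst
    have h2 := hYmono s hs t ht hst
    have hp1' : (0:ℝ) ≤ 1 - p := by linarith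
    nlinarith
  refine ⟨part1, ?_⟩
  have hcos : ∀ d a : ℝ, ∫ ω, Real.cos (a + d * Z ω) ∂P'
      = (Complex.exp (↑a * Complex.I) * φZ d).re := by
    intro d a
    have h1 : ∀ ω, Real.cos (a + d * Z ω)
        = (Complex.exp (↑a * Complex.I) * Complex.exp (Complex.I * (↑d * ↑(Z ω)))).re := by
      intro ω
      rw [← Complex.exp_add,
        show (↑a * Complex.I + Complex.I * (↑d * ↑(Z ω)) : ℂ) = ↑(a + d * Z ω) * Complex.I by
          push_cast; ring,
        Complex.exp_ofReal_mul_I_re]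
    simp_rw [h1]
    rw [show (fun ω => (Complex.exp (↑a * Complex.I) * Complex.exp (Complex.I * (↑d * ↑(Z ω)))).re)
        = fun ω => RCLike.re (Complex.exp (↑a * Complex.I)
          * Complex.exp (Complex.I * (↑d * ↑(Z ω)))) from rfl]
    rw [integral_re ((intg P' Z hZ d).const_mul _), integral_const_mul, ← hφZ]
    simp [RCLike.re_to_complex]
  have h2 : ∀ d : ℝ, (⨆ a : ℝ, ∫ ω, Real.cos (a + d * Z ω) ∂P') = ‖φZ d‖ := by
    intro d
    simp_rw [hcos d]
    exact supre (φZ d)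
  intro s hs t ht hst
  simp only
  rw [h2 s, h2 t]
  exact part1 (mem_Ici.mpr (le_of_lt hs)) (mem_Ici.mpr (le_of_lt ht)) hst
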